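/- Let O be a discrete valuation ring with maximal ideal generated by the prime p, and suppose p > n + 1. If A ∈ GL_n(O) satisfies A^p = 1, then A = 1. -/

import Mathlib

open Polynomial

/-- Let `O` be a discrete valuation ring with maximal ideal generated by the prime `p`,
and suppose `p > n + 1`.  If `A ∈ GL_n(O)` satisfies `A ^ p = 1`, then `A = 1`. -/
theorem gl_pth_power_trivial
    (O : Type*) [CommRing O] [IsDomain O] [IsDiscreteValuationRing O]
    (p : ℕ) (hp : p.Prime)
    (hmax : IsLocalRing.maximalIdeal O = Ideal.span {(p : O)})
    (n : ℕ) (hpn : p > n + 1)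
    (A : GL (Fin n) O) (hA : A ^ p = 1) :
    A = 1 := by
  rcases Nat.eq_zero_or_pos n with hn | hn
  · subst hn
    exact Units.ext (Subsingleton.elim _ _)
  haveI : Fact p.Prime := ⟨hp⟩
  haveI : NeZero n := ⟨hn.ne'⟩
  set K := FractionRing O
  -- `p ≠ 0` in `O`
  have hOp : (p : O) ≠ 0 := by
    intro h
    exact IsDiscreteValuationRing.not_a_field O
      (by rw [hmax, h, Ideal.span_singleton_eq_bot])
  have hirr : Irreducible (p : O) :=
    IsDiscreteValuationRing.irreducible_of_span_eq_maximalIdeal _ hOp hmax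
  set 𝓟 : Ideal O := Ideal.span {(p : O)} with h𝓟
  have hPprime : 𝓟.IsPrime := hmax ▸ inferInstance
  -- The shifted cyclotomic polynomial over `O` is Eisenstein at `𝓟`.
  set f : O[X] := (cyclotomic p O).comp (X + C 1) with hf
  have hfmap : f = ((cyclotomic p ℤ).comp (X + 1)).map (Int.castRingHom O) := by
    rw [Polynomial.map_comp, map_cyclotomic]
    simp [hf]
  have hfmonic : f.Monic := (cyclotomic.monic p O).comp_X_add_C 1
  have hfdeg : f.natDegree = p - 1 := by
    rw [hf, natDegree_comp, natDegree_cyclotomic, Nat.totient_prime hp,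
      natDegree_X_add_C, mul_one]
  have hfEis : f.IsEisensteinAt 𝓟 := by
    refine hfmonic.isEisensteinAt_of_mem_of_notMem hPprime.ne_top (fun {i} hi => ?_) ?_
    · have hdZ : ((cyclotomic p ℤ).comp (X + 1)).natDegree = p - 1 := by
        rw [show (X + 1 : ℤ[X]) = X + C 1 by simp, natDegree_comp,
          natDegree_cyclotomic, Nat.totient_prime hp, natDegree_X_add_C, mul_one]
      have hIZ := (cyclotomic_comp_X_add_one_isEisensteinAt p).mem
        (show i < ((cyclotomic p ℤ).comp (X + 1)).natDegree by omega)
      obtain ⟨c, hc⟩ := Ideal.mem_span_singleton.mp hIZ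
      rw [hfmap, coeff_map, hc]
      rw [h𝓟, Ideal.mem_span_singleton]
      exact ⟨(c : O), by simp⟩
    · have h0 : f.coeff 0 = (p : O) := by
        rw [coeff_zero_eq_eval_zero, hf, eval_comp]
        simp [eval_one_cyclotomic_prime]
      rw [h0, h𝓟, Ideal.span_singleton_pow, Ideal.mem_span_singleton]
      intro hdvd
      obtain ⟨c, hc⟩ := hdvd
      have h1 : (1 : O) = p * c := mul_left_cancel₀ hOp (by linear_combination hc)
      exact hirr.not_isUnit (IsUnit.of_mul_eq_one _ h1.symm)
  have hfirrO : Irreducible f :=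
    hfEis.irreducible hPprime hfmonic.isPrimitive (by omega)
  -- Pass to the fraction field.
  have hfirrK : Irreducible (f.map (algebraMap O K)) :=
    (hfmonic.irreducible_iff_irreducible_map_fraction_map).1 hfirrO
  have hfKeq : f.map (algebraMap O K) = (cyclotomic p K).comp (X + C 1) := by
    rw [hf, Polynomial.map_comp, map_cyclotomic]
    simp
  set Φ : K[X] := cyclotomic p K with hΦ
  have hΦirr : Irreducible Φ := by
    have : Irreducible ((algEquivAevalXAddC (1 : K)) Φ) := by
      rw [show (algEquivAevalXAddC (1 : K)) Φ = Φ.comp (X + C 1) from rfl, ← hfKeq]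
      exact hfirrK
    exact (MulEquiv.irreducible_iff (algEquivAevalXAddC (1 : K))).mp this
  -- The matrix over K.
  set φ : O →+* K := (algebraMap O K : O →+* K) with hφ
  set M : Matrix (Fin n) (Fin n) K := φ.mapMatrix (A : Matrix (Fin n) (Fin n) O) with hM
  have hMp : M ^ p = 1 := by
    rw [hM, ← map_pow, ← Units.val_pow_eq_pow_val, hA, Units.val_one, map_one]
  have hint : IsIntegral K M := IsIntegral.of_finite K M
  set μ : K[X] := minpoly K M with hμ
  have hμ0 : μ ≠ 0 := minpoly.ne_zero hint
  have h1 : μ ∣ X ^ p - 1 := by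
    apply minpoly.dvd
    rw [map_sub, map_pow, aeval_X, map_one, hMp, sub_self]
  have hdegμ : μ.natDegree ≤ n := by
    calc μ.natDegree ≤ M.charpoly.natDegree :=
          natDegree_le_of_dvd (Matrix.minpoly_dvd_charpoly M) (Matrix.charpoly_monic M).ne_zero
    _ = n := by rw [Matrix.charpoly_natDegree_eq_dim, Fintype.card_fin]
  have hfac : Φ * (X - 1) = X ^ p - 1 := cyclotomic_prime_mul_X_sub_one K p
  have hΦdeg : Φ.natDegree = p - 1 := by
    rw [hΦ, natDegree_cyclotomic, Nat.totient_prime hp]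
  have hΦnotdvd : ¬ Φ ∣ μ := by
    intro h
    have := natDegree_le_of_dvd h hμ0
    omega
  have hcop : IsCoprime μ Φ := (hΦirr.coprime_iff_not_dvd.mpr hΦnotdvd).symm
  have hdvd : μ ∣ X - 1 := hcop.dvd_of_dvd_mul_left (by rwa [hfac])
  -- conclude `M = 1`
  have hM1 : M = 1 := by
    obtain ⟨c, hc⟩ := hdvd
    have : aeval M (X - 1 : K[X]) = 0 := by
      rw [hc, map_mul, minpoly.aeval, zero_mul]
    rw [map_sub, aeval_X, map_one, sub_eq_zero] at this
    exact this
  have hinj : Function.Injective φ := IsFractionRing.injective O K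
  have : (A : Matrix (Fin n) (Fin n) O) = 1 := by
    apply Matrix.map_injective hinj
    have h1map : (1 : Matrix (Fin n) (Fin n) O).map φ = (1 : Matrix (Fin n) (Fin n) K) :=
      map_one (φ.mapMatrix : Matrix (Fin n) (Fin n) O →+* Matrix (Fin n) (Fin n) K)
    show ((A : Matrix (Fin n) (Fin n) O)).map ⇑φ = Matrix.map (1 : Matrix (Fin n) (Fin n) O) ⇑φ
    rw [h1map]
    exact hM1
  exact Units.ext this
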